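/- Let q ∈ (0, π/2] and c > 0 with q > 2c. Let x, y ∈ ℝ² with x ≠ 0, and suppose ∠(x,y) ≤ c and y ∈ C^F_{π/2−q}(x) ∪ C^B_{π/2−q}(x). Then ‖y − x‖ ≤ csc(q/2)·‖x‖·∠(x,y). -/

import Mathlib

open InnerProductGeometry Real Set Metric Pointwise RealInnerProductSpace

/-- `v` rotated counterclockwise by `π/2`. -/
noncomputable def perp (v : EuclideanSpace ℝ (Fin 2)) : EuclideanSpace ℝ (Fin 2) :=
  (WithLp.equiv 2 (Fin 2 → ℝ)).symm ![-(v 1), v 0]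

/-- The forward cone `C^F_{π/2 - q}(v)`. -/
noncomputable def coneF (q : ℝ) (v : EuclideanSpace ℝ (Fin 2)) :
    Set (EuclideanSpace ℝ (Fin 2)) :=
  {v} ∪ {w | w ≠ v ∧ angle (w - v) (perp v) ≤ π / 2 - q}

/-- The backward cone `C^B_{π/2 - q}(v)`. -/
noncomputable def coneB (q : ℝ) (v : EuclideanSpace ℝ (Fin 2)) :
    Set (EuclideanSpace ℝ (Fin 2)) :=
  {v} ∪ {w | w ≠ v ∧ angle (w - v) (-(perp v)) ≤ π / 2 - q}

/-- The cone `W_{v,c}` about direction `v` with apex `0` and half-aperture `c`. -/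
noncomputable def coneW (v : EuclideanSpace ℝ (Fin 2)) (c : ℝ) :
    Set (EuclideanSpace ℝ (Fin 2)) :=
  {0} ∪ {z | z ≠ 0 ∧ angle z v ≤ c}

/-- The set of `(q,c)`-regeneration sites of `Γ`, as seen from the origin. -/
noncomputable def RG (q c : ℝ) (Γ : Set (EuclideanSpace ℝ (Fin 2))) :
    Set (EuclideanSpace ℝ (Fin 2)) :=
  {v | v ∈ Γ ∧ v ≠ 0 ∧ Γ ∩ coneW v c ⊆ coneF q v ∪ coneB q v}

/-- The set of `(q,c)`-regeneration sites of `Γ` as seen from `x`: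
`RG_{q,c,x}(Γ) = x + RG_{q,c}(Γ - x)`. -/
noncomputable def RGat (q c : ℝ) (x : EuclideanSpace ℝ (Fin 2))
    (Γ : Set (EuclideanSpace ℝ (Fin 2))) : Set (EuclideanSpace ℝ (Fin 2)) :=
  (fun z => x + z) '' RG q c ((fun z => z - x) '' Γ)

lemma inner_two (a b : EuclideanSpace ℝ (Fin 2)) : ⟪a, b⟫ = a 0 * b 0 + a 1 * b 1 := by
  simp [PiLp.inner_apply, RCLike.inner_apply, Fin.sum_univ_two]; ring

lemma perp_apply0 (v : EuclideanSpace ℝ (Fin 2)) : perp v 0 = -(v 1) := rfl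
lemma perp_apply1 (v : EuclideanSpace ℝ (Fin 2)) : perp v 1 = v 0 := rfl

lemma norm_perp (v : EuclideanSpace ℝ (Fin 2)) : ‖perp v‖ = ‖v‖ := by
  have h : ⟪perp v, perp v⟫ = ⟪v, v⟫ := by
    simp only [inner_two, perp_apply0, perp_apply1]; ring
  rw [real_inner_self_eq_norm_sq, real_inner_self_eq_norm_sq] at h
  nlinarith [norm_nonneg (perp v), norm_nonneg v]

lemma pyth (w v : EuclideanSpace ℝ (Fin 2)) :
    ⟪w, v⟫ ^ 2 + ⟪w, perp v⟫ ^ 2 = ‖w‖ ^ 2 * ‖v‖ ^ 2 := by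
  rw [← real_inner_self_eq_norm_sq, ← real_inner_self_eq_norm_sq]
  simp only [inner_two, perp_apply0, perp_apply1]
  ring

lemma law_sines (x y : EuclideanSpace ℝ (Fin 2)) :
    Real.sin (angle y (y - x)) * (‖y‖ * ‖y - x‖) = Real.sin (angle y x) * (‖y‖ * ‖x‖) := by
  rw [sin_angle_mul_norm_mul_norm, sin_angle_mul_norm_mul_norm]
  congr 1
  simp only [inner_sub_right, inner_sub_left, real_inner_comm x y]
  ring

lemma angle_range {w v : EuclideanSpace ℝ (Fin 2)} (hw : w ≠ 0) (hv : v ≠ 0) {q : ℝ}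
    (hq0 : 0 ≤ q) (hq : q ≤ π / 2)
    (h : |⟪w, v⟫| ≤ Real.cos q * (‖w‖ * ‖v‖)) : q ≤ angle w v ∧ angle w v ≤ π - q := by
  have hw' : 0 < ‖w‖ := norm_pos_iff.mpr hw
  have hv' : 0 < ‖v‖ := norm_pos_iff.mpr hv
  have hn : 0 < ‖w‖ * ‖v‖ := by positivity
  have hcos : |Real.cos (angle w v)| ≤ Real.cos q := by
    rw [cos_angle, abs_div, abs_of_pos hn, div_le_iff₀ hn]
    exact h
  have h1 : Real.cos (angle w v) ≤ Real.cos q := (abs_le.mp hcos).2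
  have h2 : Real.cos (π - q) ≤ Real.cos (angle w v) := by
    rw [Real.cos_pi_sub]; linarith [(abs_le.mp hcos).1]
  constructor
  · by_contra hlt
    push_neg at hlt
    exact absurd (Real.strictAntiOn_cos ⟨angle_nonneg _ _, angle_le_pi _ _⟩
      ⟨hq0, by linarith [Real.pi_pos]⟩ hlt) (not_lt.mpr h1)
  · by_contra hlt
    push_neg at hlt
    exact absurd (Real.strictAntiOn_cos ⟨by linarith [Real.pi_pos], by linarith⟩
      ⟨angle_nonneg _ _, angle_le_pi _ _⟩ hlt) (not_lt.mpr h2)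

lemma sin_lower {a t : ℝ} (ha0 : 0 < a) (ha : a ≤ π / 2) (h1 : a ≤ t) (h2 : t ≤ π - a) :
    Real.sin a ≤ Real.sin t := by
  rcases le_or_gt t (π / 2) with h | h
  · exact Real.strictMonoOn_sin.monotoneOn ⟨by linarith, ha⟩ ⟨by linarith, h⟩ h1
  · rw [← Real.sin_pi_sub t]
    exact Real.strictMonoOn_sin.monotoneOn ⟨by linarith, ha⟩ ⟨by linarith, by linarith⟩
      (by linarith)

/-- Forward/backward-cone angle condition implies the squared-inner bound. -/
lemma cone_sq {q : ℝ} (hq : 0 < q) (hq' : q ≤ π / 2) {x w p : EuclideanSpace ℝ (Fin 2)}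
    (hp : ‖p‖ = ‖x‖) (hang : angle w p ≤ π / 2 - q) :
    Real.sin q ^ 2 * (‖w‖ ^ 2 * ‖x‖ ^ 2) ≤ ⟪w, p⟫ ^ 2 := by
  have h1 : Real.cos (π / 2 - q) ≤ Real.cos (angle w p) :=
    Real.cos_le_cos_of_nonneg_of_le_pi (angle_nonneg _ _) (by linarith [Real.pi_pos]) hang
  rw [Real.cos_pi_div_two_sub] at h1
  have h2 := cos_angle_mul_norm_mul_norm w p
  have hs : 0 ≤ Real.sin q := Real.sin_nonneg_of_nonneg_of_le_pi hq.le
    (by linarith [Real.pi_pos])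
  have h3 : Real.sin q * (‖w‖ * ‖p‖) ≤ ⟪w, p⟫ := by
    rw [← h2]
    exact mul_le_mul_of_nonneg_right h1 (by positivity)
  have h4 : 0 ≤ Real.sin q * (‖w‖ * ‖p‖) := by positivity
  rw [← hp]
  nlinarith [mul_le_mul h3 h3 h4 (h4.trans h3)]

/-- If `∠(x,y) ≤ c` and `y` lies in the union of the forward and backward cones at `x`
with parameter `q > 2c`, then `‖y - x‖ ≤ csc(q/2) · ‖x‖ · ∠(x,y)`. -/
theorem stmt2 (q c : ℝ) (hq : 0 < q) (hq' : q ≤ π / 2) (hc : 0 < c) (hqc : 2 * c < q)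
    (x y : EuclideanSpace ℝ (Fin 2)) (hx : x ≠ 0)
    (hangle : angle x y ≤ c) (hy : y ∈ coneF q x ∪ coneB q x) :
    ‖y - x‖ ≤ (Real.sin (q / 2))⁻¹ * ‖x‖ * angle x y := by
  have hpi := Real.pi_pos
  by_cases hyx : y = x
  · simp [hyx, angle_self hx]
  -- y ≠ 0
  have hy0 : y ≠ 0 := by
    intro h
    rw [h, angle_zero_right] at hangle
    linarith
  have hw : y - x ≠ 0 := sub_ne_zero.mpr hyx
  -- squared inner bound from the cone condition
  have hsq : Real.sin q ^ 2 * (‖y - x‖ ^ 2 * ‖x‖ ^ 2) ≤ ⟪y - x, perp x⟫ ^ 2 := by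
    rcases hy with h | h
    · rcases h with h | h
      · exact absurd h hyx
      · exact cone_sq hq hq' (norm_perp x) h.2
    · rcases h with h | h
      · exact absurd h hyx
      · have := cone_sq hq hq' (x := x) (p := -(perp x))
          (by rw [norm_neg]; exact norm_perp x) h.2
        rw [inner_neg_right] at this; nlinarith [this]
  -- |⟪y-x, x⟫| ≤ cos q * (‖y-x‖ * ‖x‖)
  have habs : |⟪y - x, x⟫| ≤ Real.cos q * (‖y - x‖ * ‖x‖) := by
    have hp := pyth (y - x) x
    have hcq : 0 ≤ Real.cos q := Real.cos_nonneg_of_mem_Icc ⟨by linarith, hq'⟩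
    have hsc : Real.sin q ^ 2 + Real.cos q ^ 2 = 1 := by
      rw [add_comm]; exact Real.cos_sq_add_sin_sq q
    nlinarith [sq_abs ⟪y - x, x⟫, abs_nonneg ⟪y - x, x⟫, norm_nonneg (y - x), norm_nonneg x,
      mul_nonneg (norm_nonneg (y - x)) (norm_nonneg x),
      mul_nonneg hcq (mul_nonneg (norm_nonneg (y - x)) (norm_nonneg x))]
  have hrange := angle_range hw hx hq.le hq' habs
  -- angle sum
  have hsum := angle_add_angle_sub_add_angle_sub_eq_pi x hy0
  have hγ : angle x (x - y) = π - angle (y - x) x := by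
    rw [show x - y = -(y - x) from (neg_sub y x).symm, angle_neg_right, angle_comm]
  have hα0 : 0 ≤ angle x y := angle_nonneg _ _
  have hδ1 : q / 2 ≤ angle y (y - x) := by
    rw [hγ] at hsum; linarith [hrange.2]
  have hδ2 : angle y (y - x) ≤ π - q / 2 := by
    rw [hγ] at hsum; linarith [hrange.1]
  have hs2 : 0 < Real.sin (q / 2) :=
    Real.sin_pos_of_pos_of_lt_pi (by linarith) (by linarith)
  have hsinδ : Real.sin (q / 2) ≤ Real.sin (angle y (y - x)) :=
    sin_lower (by linarith) (by linarith) hδ1 hδ2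
  -- law of sines, cancel ‖y‖
  have hy' : 0 < ‖y‖ := norm_pos_iff.mpr hy0
  have hkey : Real.sin (angle y (y - x)) * ‖y - x‖ = Real.sin (angle x y) * ‖x‖ := by
    have h := law_sines x y
    rw [angle_comm y x] at h
    have := mul_left_cancel₀ (ne_of_gt hy')
      (show ‖y‖ * (Real.sin (angle y (y - x)) * ‖y - x‖)
          = ‖y‖ * (Real.sin (angle x y) * ‖x‖) by linarith [h])
    exact this
  rw [show (Real.sin (q / 2))⁻¹ * ‖x‖ * angle x y = ‖x‖ * angle x y / Real.sin (q / 2)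
    by ring, le_div_iff₀ hs2]
  calc ‖y - x‖ * Real.sin (q / 2)
      ≤ ‖y - x‖ * Real.sin (angle y (y - x)) :=
        mul_le_mul_of_nonneg_left hsinδ (norm_nonneg _)
    _ = Real.sin (angle x y) * ‖x‖ := by rw [mul_comm]; exact hkey
    _ ≤ angle x y * ‖x‖ := mul_le_mul_of_nonneg_right (Real.sin_le hα0) (norm_nonneg x)
    _ = ‖x‖ * angle x y := mul_comm _ _
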